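/- (Construction of a simple evolution leading to a given pure state.) Let φ be a unit vector in ℂⁿ and let ρ = φφ† be the corresponding pure-state density matrix. Then there exists an indecomposable n×n complex matrix h such that for every density matrix σ, D_h(σ) = 0 if and only if σ = ρ; i.e. there is a simple Lindblad evolution having the pure state ρ as its unique stationary state. -/

import Mathlib

open Matrix
open scoped ComplexOrder

/-- The simple Lindblad generator `D_h`. -/
noncomputable def lindblad {n : ℕ} (h ρ : Matrix (Fin n) (Fin n) ℂ) :
    Matrix (Fin n) (Fin n) ℂ :=
  h * ρ * hᴴ - (1 / 2 : ℂ) • (hᴴ * h * ρ + ρ * (hᴴ * h))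

/-- A matrix is indecomposable if the only orthogonal projections commuting with it
are `0` and `1`. -/
def Indecomposable {n : ℕ} (h : Matrix (Fin n) (Fin n) ℂ) : Prop :=
  ∀ P : Matrix (Fin n) (Fin n) ℂ, P = Pᴴ → P * P = P → P * h = h * P → P = 0 ∨ P = 1

namespace Stmt16Aux

noncomputable def shiftM (m : ℕ) : Matrix (Fin (m+1)) (Fin (m+1)) ℂ :=
  Matrix.of fun i j => if (i : ℕ) + 1 = (j : ℕ) then 1 else 0

noncomputable def E0 (m : ℕ) : Matrix (Fin (m+1)) (Fin (m+1)) ℂ :=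
  Matrix.of fun i j => if i = 0 ∧ j = 0 then 1 else 0

variable {m : ℕ}

lemma shiftM_apply (i j : Fin (m+1)) :
    shiftM m i j = if (i : ℕ) + 1 = (j : ℕ) then 1 else 0 := rfl

lemma E0_apply (i j : Fin (m+1)) : E0 m i j = if i = 0 ∧ j = 0 then 1 else 0 := rfl

lemma L3 (τ : Matrix (Fin (m+1)) (Fin (m+1)) ℂ) (i : Fin m) (j : Fin (m+1)) :
    (shiftM m * τ) i.castSucc j = τ i.succ j := by
  rw [mul_apply, Fintype.sum_eq_single i.succ]
  · simp [shiftM_apply]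
  · intro b hb
    rw [shiftM_apply, if_neg, zero_mul]
    intro hc
    exact hb (by ext; simpa using hc.symm)

lemma L4 (τ : Matrix (Fin (m+1)) (Fin (m+1)) ℂ) (j : Fin (m+1)) :
    (shiftM m * τ) (Fin.last m) j = 0 := by
  rw [mul_apply]
  apply Finset.sum_eq_zero
  intro b _
  rw [shiftM_apply, if_neg, zero_mul]
  have := b.isLt
  simp only [Fin.val_last]
  omega

lemma L5 (τ : Matrix (Fin (m+1)) (Fin (m+1)) ℂ) (i : Fin (m+1)) (j : Fin m) :
    (τ * shiftM m) i j.succ = τ i j.castSucc := by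
  rw [mul_apply, Fintype.sum_eq_single j.castSucc]
  · simp [shiftM_apply]
  · intro b hb
    rw [shiftM_apply, if_neg, mul_zero]
    intro hc
    exact hb (by ext; simp at hc ⊢; omega)

lemma L6 (τ : Matrix (Fin (m+1)) (Fin (m+1)) ℂ) (i : Fin (m+1)) :
    (τ * shiftM m) i 0 = 0 := by
  rw [mul_apply]
  apply Finset.sum_eq_zero
  intro b _
  rw [shiftM_apply, if_neg, mul_zero]
  simp

lemma L1 (τ : Matrix (Fin (m+1)) (Fin (m+1)) ℂ) (i : Fin (m+1)) (j : Fin m) :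
    (τ * (shiftM m)ᴴ) i j.castSucc = τ i j.succ := by
  rw [mul_apply, Fintype.sum_eq_single j.succ]
  · simp [conjTranspose_apply, shiftM_apply]
  · intro b hb
    rw [conjTranspose_apply, shiftM_apply, if_neg, star_zero, mul_zero]
    intro hc
    exact hb (by ext; simp at hc ⊢; omega)

lemma L2 (τ : Matrix (Fin (m+1)) (Fin (m+1)) ℂ) (i : Fin (m+1)) :
    (τ * (shiftM m)ᴴ) i (Fin.last m) = 0 := by
  rw [mul_apply]
  apply Finset.sum_eq_zero
  intro b _
  rw [conjTranspose_apply, shiftM_apply, if_neg, star_zero, mul_zero]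
  have := b.isLt
  simp only [Fin.val_last]
  omega

lemma E0_mul (τ : Matrix (Fin (m+1)) (Fin (m+1)) ℂ) (i j : Fin (m+1)) :
    (E0 m * τ) i j = if i = 0 then τ 0 j else 0 := by
  rw [mul_apply]
  by_cases hi : i = 0
  · subst hi
    rw [Fintype.sum_eq_single (0 : Fin (m+1))]
    · simp [E0_apply]
    · intro b hb
      rw [E0_apply, if_neg, zero_mul]
      tauto
  · rw [if_neg hi]
    apply Finset.sum_eq_zero
    intro b _
    rw [E0_apply, if_neg, zero_mul]
    tauto

lemma mul_E0 (τ : Matrix (Fin (m+1)) (Fin (m+1)) ℂ) (i j : Fin (m+1)) :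
    (τ * E0 m) i j = if j = 0 then τ i 0 else 0 := by
  rw [mul_apply]
  by_cases hj : j = 0
  · subst hj
    rw [Fintype.sum_eq_single (0 : Fin (m+1))]
    · simp [E0_apply]
    · intro b hb
      rw [E0_apply, if_neg, mul_zero]
      tauto
  · rw [if_neg hj]
    apply Finset.sum_eq_zero
    intro b _
    rw [E0_apply, if_neg, mul_zero]
    tauto

lemma E0_mul_E0 : E0 m * E0 m = E0 m := by
  ext i j
  rw [E0_mul, E0_apply]
  by_cases hi : i = 0 <;> by_cases hj : j = 0 <;> simp [E0_apply, hi, hj]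

lemma shiftM_conjT_mul_self : (shiftM m)ᴴ * shiftM m = 1 - E0 m := by
  ext j k
  rcases Fin.eq_zero_or_eq_succ j with hj | ⟨j', rfl⟩
  · subst hj
    rw [mul_apply]
    rw [Finset.sum_eq_zero]
    · by_cases hk : k = 0 <;> simp [Matrix.sub_apply, one_apply, E0_apply, hk, eq_comm]
    · intro b _
      rw [conjTranspose_apply, shiftM_apply, if_neg, star_zero, zero_mul]
      simp
  · rw [mul_apply, Fintype.sum_eq_single j'.castSucc]
    · have h1 : shiftM m j'.castSucc j'.succ = 1 := by
        rw [shiftM_apply, if_pos (by simp)]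
      have h2 : ¬(j'.succ = 0 ∧ k = 0) := by simp [Fin.succ_ne_zero]
      have h3 : ((j'.castSucc : ℕ) + 1 = (k : ℕ)) ↔ j'.succ = k := by
        rw [Fin.ext_iff]; simp
      rw [conjTranspose_apply, h1, star_one, one_mul, shiftM_apply, Matrix.sub_apply,
        one_apply, E0_apply, if_neg h2, sub_zero, if_congr h3 rfl rfl]
    · intro b hb
      rw [conjTranspose_apply, shiftM_apply, if_neg, star_zero, zero_mul]
      intro hc
      exact hb (by ext; simp at hc ⊢; omega)


lemma lindblad_shiftM_E0 : lindblad (shiftM m) (E0 m) = 0 := by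
  have hs : shiftM m * E0 m = 0 := by
    ext i j
    rw [mul_apply]
    apply Finset.sum_eq_zero
    intro b _
    by_cases hb : b = 0
    · subst hb
      rw [shiftM_apply, if_neg (by simp), zero_mul]
    · rw [E0_apply, if_neg (by tauto), mul_zero]
  rw [lindblad, shiftM_conjT_mul_self, hs, Matrix.zero_mul, sub_mul, one_mul,
    Matrix.mul_sub, mul_one, E0_mul_E0, sub_self]
  simp

lemma shiftM_stationary_unique (τ : Matrix (Fin (m+1)) (Fin (m+1)) ℂ)
    (hps : τ.PosSemidef) (htr : τ.trace = 1)
    (H : lindblad (shiftM m) τ = 0) : τ = E0 m := by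
  have H' : shiftM m * τ * (shiftM m)ᴴ
      = (1/2 : ℂ) • ((1 - E0 m) * τ + τ * (1 - E0 m)) := by
    have h := H
    rwa [lindblad, shiftM_conjT_mul_self, sub_eq_zero] at h
  -- diagonal equation for i ≠ 0
  have diag_eq : ∀ i : Fin (m+1), i ≠ 0 →
      (shiftM m * τ * (shiftM m)ᴴ) i i = τ i i := by
    intro i hi
    have h := congrFun (congrFun H' i) i
    rw [Matrix.smul_apply, Matrix.add_apply, sub_mul, Matrix.mul_sub, one_mul, mul_one,
      Matrix.sub_apply, Matrix.sub_apply, E0_mul, mul_E0, if_neg hi, if_neg hi, sub_zero,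
      smul_eq_mul] at h
    rw [h]; ring
  have last_zero : Fin.last m ≠ 0 → τ (Fin.last m) (Fin.last m) = 0 := by
    intro h0
    have := diag_eq (Fin.last m) h0
    rw [mul_assoc, L4] at this
    exact this.symm
  have step : ∀ k : Fin m, k.castSucc ≠ 0 →
      τ k.castSucc k.castSucc = τ k.succ k.succ := by
    intro k hk
    have := diag_eq k.castSucc hk
    rw [mul_assoc, L3, L1] at this
    exact this.symm
  have key : ∀ d : ℕ, ∀ i : Fin (m+1), m ≤ (i : ℕ) + d → i ≠ 0 → τ i i = 0 := by
    intro d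
    induction d with
    | zero =>
      intro i hle hi
      have hi' : i = Fin.last m := by
        ext; simp only [Fin.val_last]; have := i.isLt; omega
      subst hi'
      exact last_zero hi
    | succ d ih =>
      intro i hle hi
      by_cases hc : (i : ℕ) = m
      · have hi' : i = Fin.last m := by ext; simpa using hc
        subst hi'
        exact last_zero hi
      · have hlt : (i : ℕ) < m := by have := i.isLt; omega
        set k : Fin m := ⟨i, hlt⟩ with hkdef
        have hik : i = k.castSucc := by ext; simp [hkdef]
        rw [hik, step k (hik ▸ hi)]
        exact ih k.succ (by simp [hkdef]; omega) (Fin.succ_ne_zero k)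
  have diagz : ∀ i : Fin (m+1), i ≠ 0 → τ i i = 0 := fun i hi =>
    key m i (by omega) hi
  obtain ⟨B, hB⟩ : ∃ B : Matrix (Fin (m+1)) (Fin (m+1)) ℂ, τ = Bᴴ * B := by
    open scoped MatrixOrder in
    exact CStarAlgebra.nonneg_iff_eq_star_mul_self.mp hps.nonneg
  have colz : ∀ j : Fin (m+1), j ≠ 0 → ∀ k, B k j = 0 := by
    intro j hj k
    have h0 : τ j j = 0 := diagz j hj
    rw [hB, mul_apply] at h0
    have hnn : ∀ b ∈ Finset.univ, (0:ℂ) ≤ Bᴴ j b * B b j := by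
      intro b _
      rw [conjTranspose_apply]
      exact star_mul_self_nonneg _
    have := (Finset.sum_eq_zero_iff_of_nonneg hnn).mp h0 k (Finset.mem_univ k)
    rw [conjTranspose_apply] at this
    rcases mul_eq_zero.mp this with h | h
    · exact star_eq_zero.mp h
    · exact h
  have entryz : ∀ i j : Fin (m+1), (i ≠ 0 ∨ j ≠ 0) → τ i j = 0 := by
    intro i j hij
    rw [hB, mul_apply]
    apply Finset.sum_eq_zero
    intro b _
    rcases hij with h | h
    · rw [conjTranspose_apply, colz i h b, star_zero, zero_mul]
    · rw [colz j h b, mul_zero]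
  have tr00 : τ 0 0 = 1 := by
    have h : ∑ i, τ i i = 1 := by simpa [Matrix.trace, Matrix.diag] using htr
    rw [Fin.sum_univ_succ] at h
    rwa [Finset.sum_eq_zero (fun k _ => diagz k.succ (Fin.succ_ne_zero k)), add_zero] at h
  ext i j
  rw [E0_apply]
  by_cases hi : i = 0
  · by_cases hj : j = 0
    · subst hi; subst hj; rw [if_pos ⟨rfl, rfl⟩]; exact tr00
    · rw [if_neg (by tauto)]; exact entryz i j (Or.inr hj)
  · rw [if_neg (by tauto)]; exact entryz i j (Or.inl hi)

lemma shiftM_indecomposable : Indecomposable (shiftM m) := by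
  intro Q hQH hQ2 hcomm
  have R1 : ∀ i j : Fin m, Q i.castSucc j.castSucc = Q i.succ j.succ := by
    intro i j
    have h1 : (Q * shiftM m) i.castSucc j.succ = Q i.castSucc j.castSucc := L5 Q _ j
    have h2 : (shiftM m * Q) i.castSucc j.succ = Q i.succ j.succ := L3 Q i _
    rw [← h1, hcomm, h2]
  have R2 : ∀ j : Fin m, Q (Fin.last m) j.castSucc = 0 := by
    intro j
    have h1 : (Q * shiftM m) (Fin.last m) j.succ = Q (Fin.last m) j.castSucc := L5 Q _ j
    have h2 : (shiftM m * Q) (Fin.last m) j.succ = 0 := L4 Q _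
    rw [← h1, hcomm, h2]
  have lower : ∀ i j : Fin (m+1), (j : ℕ) < (i : ℕ) → Q i j = 0 := by
    have key : ∀ d : ℕ, ∀ i j : Fin (m+1), m ≤ (i : ℕ) + d → (j : ℕ) < (i : ℕ) → Q i j = 0 := by
      intro d
      induction d with
      | zero =>
        intro i j hle hji
        have hi' : i = Fin.last m := by ext; simp only [Fin.val_last]; have := i.isLt; omega
        subst hi'
        have hj : (j : ℕ) < m := by simpa using hji
        have : j = (⟨j, hj⟩ : Fin m).castSucc := by ext; simp
        rw [this]; exact R2 _
      | succ d ih =>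
        intro i j hle hji
        by_cases hc : (i : ℕ) = m
        · have hi' : i = Fin.last m := by ext; simpa using hc
          subst hi'
          have hj : (j : ℕ) < m := by simp at hji; omega
          have : j = (⟨j, hj⟩ : Fin m).castSucc := by ext; simp
          rw [this]; exact R2 _
        · have hlt : (i : ℕ) < m := by have := i.isLt; omega
          have hjlt : (j : ℕ) < m := by omega
          set k : Fin m := ⟨i, hlt⟩
          set l : Fin m := ⟨j, hjlt⟩
          have hik : i = k.castSucc := by ext; simp [k]
          have hjl : j = l.castSucc := by ext; simp [l]
          rw [hik, hjl, R1 k l]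
          exact ih k.succ l.succ (by simp [k]; omega) (by simp [k, l]; omega)
    intro i j h
    exact key m i j (by omega) h
  have upper : ∀ i j : Fin (m+1), (i : ℕ) < (j : ℕ) → Q i j = 0 := by
    intro i j h
    have := congrFun (congrFun hQH i) j
    rw [this, conjTranspose_apply, lower j i h, star_zero]
  have diag : ∀ i : Fin (m+1), Q i i = Q 0 0 := by
    have aux : ∀ k : ℕ, ∀ h : k < m + 1, Q ⟨k, h⟩ ⟨k, h⟩ = Q 0 0 := by
      intro k
      induction k with
      | zero => intro h; rfl
      | succ k ih =>
        intro h
        have hk : k < m := by omega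
        have h1 : (⟨k+1, h⟩ : Fin (m+1)) = (⟨k, hk⟩ : Fin m).succ := by ext; simp
        have h2 : (⟨k, by omega⟩ : Fin (m+1)) = (⟨k, hk⟩ : Fin m).castSucc := by ext; simp
        rw [h1, ← R1, ← h2, ih (by omega)]
    intro i
    have : i = ⟨(i : ℕ), i.isLt⟩ := by ext; rfl
    rw [this, aux i i.isLt]
  set c : ℂ := Q 0 0 with hc
  have hQc : Q = c • (1 : Matrix (Fin (m+1)) (Fin (m+1)) ℂ) := by
    ext i j
    rw [Matrix.smul_apply, one_apply]
    rcases lt_trichotomy (i : ℕ) (j : ℕ) with h | h | h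
    · rw [upper i j h, if_neg (by intro he; subst he; omega), smul_zero]
    · have : i = j := by ext; exact h
      subst this
      rw [if_pos rfl, smul_eq_mul, mul_one, diag i]
    · rw [lower i j h, if_neg (by intro he; subst he; omega), smul_zero]
  have hcc : c * c = c := by
    have := congrFun (congrFun hQ2 0) 0
    rw [hQc] at this
    simpa using this
  rcases mul_eq_zero.mp (by rw [mul_sub, mul_one, hcc, sub_self] : c * (c - 1) = 0) with h | h
  · left; rw [hQc, h, zero_smul]
  · right; rw [hQc, sub_eq_zero.mp h, one_smul]


lemma lindblad_conj {N : ℕ} (U : Matrix (Fin N) (Fin N) ℂ)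
    (hU : Uᴴ * U = 1) (hU' : U * Uᴴ = 1) (h₀ σ : Matrix (Fin N) (Fin N) ℂ) :
    lindblad (U * h₀ * Uᴴ) σ = U * lindblad h₀ (Uᴴ * σ * U) * Uᴴ := by
  have c1 : ∀ X : Matrix (Fin N) (Fin N) ℂ, Uᴴ * (U * X) = X := fun X => by
    rw [← Matrix.mul_assoc, hU, Matrix.one_mul]
  have c2 : ∀ X : Matrix (Fin N) (Fin N) ℂ, U * (Uᴴ * X) = X := fun X => by
    rw [← Matrix.mul_assoc, hU', Matrix.one_mul]
  simp only [lindblad, conjTranspose_mul, conjTranspose_conjTranspose,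
    Matrix.mul_sub, Matrix.sub_mul, Matrix.mul_add, Matrix.add_mul,
    Matrix.mul_smul, Matrix.smul_mul, Matrix.mul_assoc, c1, c2, hU, hU',
    Matrix.mul_one, Matrix.one_mul]

end Stmt16Aux

open Stmt16Aux in
theorem stmt16' {n : ℕ} (φ : Fin n → ℂ) (hφ : star φ ⬝ᵥ φ = 1) :
    ∃ h : Matrix (Fin n) (Fin n) ℂ, Indecomposable h ∧
      ∀ σ : Matrix (Fin n) (Fin n) ℂ, σ.PosSemidef → σ.trace = 1 →
        (lindblad h σ = 0 ↔ σ = vecMulVec φ (star φ)) := by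
  obtain _ | m := n
  · exact absurd hφ (by simp [dotProduct])
  set φ' : EuclideanSpace ℂ (Fin (m+1)) := WithLp.toLp 2 φ with hφ'def
  have hnorm : Orthonormal ℂ (Set.restrict {(0 : Fin (m+1))} (fun _ => φ')) := by
    rw [orthonormal_iff_ite]
    intro i j
    have hij : i = j := Subtype.ext (by
      have hi := i.2; have hj := j.2
      simp only [Set.mem_singleton_iff] at hi hj
      rw [hi, hj])
    subst hij
    rw [if_pos rfl, PiLp.inner_apply]
    simpa [dotProduct, RCLike.inner_apply, Pi.star_apply, RCLike.star_def, hφ'def, -inner_self_eq_norm_sq_to_K, Set.restrict, mul_comm] using hφ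
  have hcard : Module.finrank ℂ (EuclideanSpace ℂ (Fin (m+1))) = Fintype.card (Fin (m+1)) :=
    finrank_euclideanSpace
  obtain ⟨b, hb⟩ := hnorm.exists_orthonormalBasis_extension_of_card_eq hcard
  have hb0 : b 0 = φ' := hb 0 rfl
  set U : Matrix (Fin (m+1)) (Fin (m+1)) ℂ := Matrix.of (fun i j => b j i) with hUdef
  have hUU : Uᴴ * U = 1 := by
    ext j k
    rw [mul_apply, one_apply]
    have horth := orthonormal_iff_ite.mp b.orthonormal j k
    rw [PiLp.inner_apply] at horth
    simpa [hUdef, conjTranspose_apply, RCLike.inner_apply, mul_comm] using horth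
  have hUU' : U * Uᴴ = 1 := mul_eq_one_comm.mp hUU
  have c1 : ∀ X : Matrix (Fin (m+1)) (Fin (m+1)) ℂ, Uᴴ * (U * X) = X := fun X => by
    rw [← Matrix.mul_assoc, hUU, Matrix.one_mul]
  have c2 : ∀ X : Matrix (Fin (m+1)) (Fin (m+1)) ℂ, U * (Uᴴ * X) = X := fun X => by
    rw [← Matrix.mul_assoc, hUU', Matrix.one_mul]
  have hU0 : ∀ i, U i 0 = φ i := fun i => congrArg (fun v => v i) hb0
  have hQE : U * E0 m * Uᴴ = vecMulVec φ (star φ) := by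
    ext i j
    rw [vecMulVec_apply, mul_apply, Fintype.sum_eq_single (0 : Fin (m+1))]
    · rw [mul_E0, if_pos rfl, conjTranspose_apply, hU0, hU0, Pi.star_apply]
    · intro b' hb'
      rw [mul_E0, if_neg hb', zero_mul]
  have hindec : Indecomposable (U * shiftM m * Uᴴ) := by
    intro P hPH hP2 hPcomm
    set Q : Matrix (Fin (m+1)) (Fin (m+1)) ℂ := Uᴴ * P * U with hQdef
    have hQH : Q = Qᴴ := by
      rw [hQdef, conjTranspose_mul, conjTranspose_mul, conjTranspose_conjTranspose,
        ← hPH, Matrix.mul_assoc]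
    have hQ2 : Q * Q = Q := by
      rw [hQdef]
      simp only [Matrix.mul_assoc, c2]
      rw [← Matrix.mul_assoc P P U, hP2]
    have hQcomm : Q * shiftM m = shiftM m * Q := by
      have hc := congrArg (fun X => Uᴴ * X * U) hPcomm
      simp only [Matrix.mul_assoc, c1, c2, hUU, hUU', Matrix.mul_one] at hc
      rw [hQdef]
      simp only [Matrix.mul_assoc, hUU, Matrix.mul_one]
      exact hc
    have hPQ : P = U * Q * Uᴴ := by
      rw [hQdef]
      simp only [Matrix.mul_assoc, c2, hUU', Matrix.mul_one]
    rcases shiftM_indecomposable Q hQH hQ2 hQcomm with h | h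
    · left; rw [hPQ, h, Matrix.mul_zero, Matrix.zero_mul]
    · right; rw [hPQ, h, Matrix.mul_one, hUU']
  refine ⟨U * shiftM m * Uᴴ, hindec, ?_⟩
  intro σ hσ htrσ
  set τ : Matrix (Fin (m+1)) (Fin (m+1)) ℂ := Uᴴ * σ * U with hτdef
  have hτps : τ.PosSemidef := hσ.conjTranspose_mul_mul_same U
  have hτtr : τ.trace = 1 := by
    rw [hτdef, Matrix.trace_mul_comm, ← Matrix.mul_assoc, hUU', Matrix.one_mul]
    exact htrσ
  have conj_eq_zero : ∀ X : Matrix (Fin (m+1)) (Fin (m+1)) ℂ, U * X * Uᴴ = 0 ↔ X = 0 := by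
    intro X
    constructor
    · intro hX
      have hc := congrArg (fun Y => Uᴴ * Y * U) hX
      simpa only [Matrix.mul_assoc, c1, hUU, Matrix.mul_one, Matrix.mul_zero,
        Matrix.zero_mul] using hc
    · intro hX; rw [hX, Matrix.mul_zero, Matrix.zero_mul]
  have hστ : σ = U * τ * Uᴴ := by
    rw [hτdef]
    simp only [Matrix.mul_assoc, c2, hUU', Matrix.mul_one]
  rw [lindblad_conj U hUU hUU' (shiftM m) σ, conj_eq_zero]
  constructor
  · intro hstat
    rw [hστ, shiftM_stationary_unique τ hτps hτtr hstat, hQE]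
  · intro hσE
    have hτE : τ = E0 m := by
      rw [hτdef, hσE, ← hQE]
      simp only [Matrix.mul_assoc, c1, hUU, Matrix.mul_one]
    rw [← hτdef, hτE]
    exact lindblad_shiftM_E0


/-- Construction of a simple evolution leading to a given pure state. -/
theorem stmt16 {n : ℕ} (φ : Fin n → ℂ) (hφ : star φ ⬝ᵥ φ = 1) :
    ∃ h : Matrix (Fin n) (Fin n) ℂ, Indecomposable h ∧
      ∀ σ : Matrix (Fin n) (Fin n) ℂ, σ.PosSemidef → σ.trace = 1 →
        (lindblad h σ = 0 ↔ σ = vecMulVec φ (star φ)) := by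
  exact stmt16' φ hφ
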